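/- If a minimal-length counterexample (q₀, q₁) to bal-decomposability exists (q₀q₁ ∈ O₂, |q₀q₁| > 2, q₀, q₁ nonempty, no bal-decomposition, and |q₀q₁| minimal among such pairs), then not both q₀ and q₁ are short; i.e. at least one of q₀, q₁ contains a bump. -/

import Mathlib

/-- A letter of the alphabet Σₙ: the `i`-th pair, with `true` for `aᵢ`
and `false` for its conjugate `āᵢ`. -/
abbrev Letter (n : ℕ) := Fin n × Bool

/-- A string (word) over Σₙ. -/
abbrev Word (n : ℕ) := List (Letter n)

/-- The conjugate letter. -/
def conj {n : ℕ} (x : Letter n) : Letter n := (x.1, !x.2)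

/-- The balance map μ : Σₙ* → ℤⁿ. -/
def mu {n : ℕ} (w : Word n) : Fin n → ℤ :=
  fun i => (w.count ((i, true) : Letter n) : ℤ) - (w.count ((i, false) : Letter n) : ℤ)

/-- The n-balanced language Oₙ. -/
def OO (n : ℕ) : Set (Word n) :=
  {w | ∀ i : Fin n, w.count ((i, true) : Letter n) = w.count ((i, false) : Letter n)}

/-- A string is short if no conjugate pair of letters both occur in it. -/
def Short {n : ℕ} (w : Word n) : Prop :=
  ∀ i : Fin n, ¬ (((i, true) : Letter n) ∈ w ∧ ((i, false) : Letter n) ∈ w)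

/-- The factor of `p` with indices from `i` to `j` (inclusive). -/
def factor {n : ℕ} (p : Word n) (i j : ℕ) : Word n :=
  (p.drop i).take (j + 1 - i)

/-- `[i, j]` is a bump of `p`: the factor `p[i..j]` is a minimal non-short factor,
i.e. it is not short but all of its ultra-proper factors are short. -/
def IsBump {n : ℕ} (p : Word n) (i j : ℕ) : Prop :=
  i < j ∧ j < p.length ∧ ¬ Short (factor p i j) ∧
    ∀ u l r : Word n, factor p i j = l ++ u ++ r → u ≠ [] → u ≠ factor p i j → Short u

/-- Bal-decomposition of a pair `(z₀, z₁)`: choose proper factorisations of `z₀` and `z₁`,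
and partition all resulting factors into two nonempty lists of length at most 2, each
concatenating to a string of O₂ of length strictly less than `|z₀z₁|`. -/
def BalDecomp (z₀ z₁ : Word 2) : Prop :=
  ∃ f₀ f₁ P Q : List (Word 2),
    f₀.flatten = z₀ ∧ [] ∉ f₀ ∧ f₁.flatten = z₁ ∧ [] ∉ f₁ ∧
    (P ++ Q).Perm (f₀ ++ f₁) ∧
    0 < P.length ∧ P.length ≤ 2 ∧ 0 < Q.length ∧ Q.length ≤ 2 ∧
    P.flatten.length < z₀.length + z₁.length ∧ Q.flatten.length < z₀.length + z₁.length ∧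
    P.flatten ∈ OO 2 ∧ Q.flatten ∈ OO 2

open List

lemma len_counts (w : Word 2) : w.length =
    w.count ((0,true) : Letter 2) + w.count ((0,false) : Letter 2) +
    w.count ((1,true) : Letter 2) + w.count ((1,false) : Letter 2) := by
  induction w with
  | nil => simp
  | cons x t ih =>
    obtain ⟨i, b⟩ := x
    fin_cases i <;> cases b <;> simp [List.count_cons] <;> omega

def P0 (w : Word 2) : ℕ := w.count ((0,true) : Letter 2) + w.count ((0,false) : Letter 2)

lemma P0_append (u v : Word 2) : P0 (u ++ v) = P0 u + P0 v := by
  simp [P0, List.count_append]; omega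

lemma P0_le_length (w : Word 2) : P0 w ≤ w.length := by
  have := len_counts w; simp [P0]; omega

lemma oo_compl (W X Y : Word 2)
    (h : ∀ l : Letter 2, X.count l + Y.count l = W.count l)
    (hW : W ∈ OO 2) (hX : X ∈ OO 2) : Y ∈ OO 2 := by
  intro i
  have h1 := h (i, true); have h2 := h (i, false)
  have := hW i; have := hX i; omega

lemma flatten_filter (A B : Word 2) :
    (([A, B].filter (fun w => !w.isEmpty)).flatten = A ++ B) := by
  rcases A <;> rcases B <;> simp

lemma nil_not_mem_filter (l : List (Word 2)) : [] ∉ l.filter (fun w => !w.isEmpty) := by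
  intro h
  have := List.of_mem_filter h
  simp at this

lemma len_filter_le (A B : Word 2) : ([A, B].filter (fun w => !w.isEmpty)).length ≤ 2 := by
  have := List.length_filter_le (fun w => !w.isEmpty) [A, B]
  simpa using this

lemma builder (z₀ z₁ A B C D U V : Word 2) (h0 : A ++ B = z₀) (h1 : C ++ D = z₁)
    (hz : z₀ ++ z₁ ∈ OO 2)
    (hperm : ([A, U, B, V] : List (Word 2)).Perm [A, B, C, D])
    (hOO : A ++ U ∈ OO 2) (hPne : A ++ U ≠ []) (hQne : B ++ V ≠ []) : BalDecomp z₀ z₁ := by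
  have hflat : ((A ++ U) ++ (B ++ V)).Perm (z₀ ++ z₁) := by
    have h := hperm.flatten
    simp only [List.flatten] at h
    rw [← h0, ← h1]
    simpa [List.append_assoc] using h
  have hPf : (([A,U].filter (fun w => !w.isEmpty)).flatten) = A ++ U := flatten_filter A U
  have hQf : (([B,V].filter (fun w => !w.isEmpty)).flatten) = B ++ V := flatten_filter B V
  have hcount : ∀ l : Letter 2, (A ++ U).count l + (B ++ V).count l = (z₀ ++ z₁).count l := by
    intro l
    have := hflat.countP_eq (· == l)
    simp only [← List.count_eq_countP, List.count_append] at this ⊢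
    omega
  have hlensum : (A ++ U).length + (B ++ V).length = z₀.length + z₁.length := by
    have := hflat.length_eq
    simp only [List.length_append] at this ⊢
    omega
  refine ⟨[A,B].filter (fun w => !w.isEmpty), [C,D].filter (fun w => !w.isEmpty),
    [A,U].filter (fun w => !w.isEmpty), [B,V].filter (fun w => !w.isEmpty),
    (flatten_filter A B).trans h0, nil_not_mem_filter _,
    (flatten_filter C D).trans h1, nil_not_mem_filter _, ?_, ?_, len_filter_le _ _,
    ?_, len_filter_le _ _, ?_, ?_, ?_, ?_⟩
  · have : ([A,U] ++ [B,V] : List (Word 2)).Perm ([A,B] ++ [C,D]) := hperm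
    simpa [← List.filter_append] using this.filter (fun w => !w.isEmpty)
  · rw [List.length_pos_iff]
    intro h
    rw [h] at hPf
    exact hPne hPf.symm
  · rw [List.length_pos_iff]
    intro h
    rw [h] at hQf
    exact hQne hQf.symm
  · rw [hPf]
    have h1 : (B ++ V).length ≠ 0 := fun h => hQne (List.eq_nil_of_length_eq_zero h)
    omega
  · rw [hQf]
    have h1 : (A ++ U).length ≠ 0 := fun h => hPne (List.eq_nil_of_length_eq_zero h)
    omega
  · rw [hPf]; exact hOO
  · rw [hQf]
    exact oo_compl (z₀ ++ z₁) (A ++ U) (B ++ V) hcount hz hOO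

lemma fin2 : ∀ i : Fin 2, i = 0 ∨ i = 1 := by decide

lemma ivt (e : ℕ → ℤ) (hstep : ∀ k, (e (k+1) - e k).natAbs ≤ 1)
    (i j : ℕ) (hij : i ≤ j) (hi : 0 ≤ e i) (hj : e j ≤ 0) :
    ∃ k, i ≤ k ∧ k ≤ j ∧ e k = 0 := by
  revert hj
  induction j, hij using Nat.le_induction with
  | base => intro hj; exact ⟨i, le_rfl, le_rfl, le_antisymm hj hi⟩
  | succ j hij ih =>
    intro hj
    by_cases h : e j ≤ 0
    · obtain ⟨k, h1, h2, h3⟩ := ih h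
      exact ⟨k, h1, h2.trans (Nat.le_succ _), h3⟩
    · have := hstep j
      exact ⟨j + 1, le_trans hij (Nat.le_succ _), le_rfl, by omega⟩

lemma ivt' (e : ℕ → ℤ) (hstep : ∀ k, (e (k+1) - e k).natAbs ≤ 1)
    (i j : ℕ) (hij : i ≤ j) (hi : e i ≤ 0) (hj : 0 ≤ e j) :
    ∃ k, i ≤ k ∧ k ≤ j ∧ e k = 0 := by
  obtain ⟨k, h1, h2, h3⟩ := ivt (fun m => -e m)
    (fun k => by have := hstep k; show ((-e (k+1)) - (-e k)).natAbs ≤ 1; omega)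
    i j hij (show (0:ℤ) ≤ -e i by omega) (show -e j ≤ 0 by omega)
  have h3' : -e k = 0 := h3
  exact ⟨k, h1, h2, by omega⟩

lemma P0_take1 (w : Word 2) : P0 (w.take 1) ≤ 1 := by
  have h := P0_le_length (w.take 1)
  have := List.length_take_le 1 w
  omega

lemma pref_bal (q₀ q₁ u₀ u₁ : Word 2)
    (hc : ∀ i : Fin 2, ∀ b : Bool, q₀.count ((i,b) : Letter 2) = 0 ∨ q₁.count ((i,b) : Letter 2) = 0)
    (hs0 : ∀ i : Fin 2, q₀.count ((i,true) : Letter 2) = 0 ∨ q₀.count ((i,false) : Letter 2) = 0)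
    (hs1 : ∀ i : Fin 2, q₁.count ((i,true) : Letter 2) = 0 ∨ q₁.count ((i,false) : Letter 2) = 0)
    (h0 : u₀.Sublist q₀) (h1 : u₁.Sublist q₁)
    (hlen : u₀.length = u₁.length) (hP : P0 u₀ = P0 u₁) :
    u₀ ++ u₁ ∈ OO 2 := by
  have key : ∀ i : Fin 2, ∀ b : Bool,
      u₀.count ((i,b) : Letter 2) = 0 ∨ u₁.count ((i,b) : Letter 2) = 0 := by
    intro i b
    rcases hc i b with h | h
    · exact Or.inl (Nat.le_zero.mp (h ▸ h0.count_le _))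
    · exact Or.inr (Nat.le_zero.mp (h ▸ h1.count_le _))
  have key0 : ∀ i : Fin 2, u₀.count ((i,true) : Letter 2) = 0 ∨ u₀.count ((i,false) : Letter 2) = 0 := by
    intro i
    rcases hs0 i with h | h
    · exact Or.inl (Nat.le_zero.mp (h ▸ h0.count_le _))
    · exact Or.inr (Nat.le_zero.mp (h ▸ h0.count_le _))
  have key1 : ∀ i : Fin 2, u₁.count ((i,true) : Letter 2) = 0 ∨ u₁.count ((i,false) : Letter 2) = 0 := by
    intro i
    rcases hs1 i with h | h
    · exact Or.inl (Nat.le_zero.mp (h ▸ h1.count_le _))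
    · exact Or.inr (Nat.le_zero.mp (h ▸ h1.count_le _))
  have l0 := len_counts u₀
  have l1 := len_counts u₁
  simp only [P0] at hP
  intro i
  simp only [List.count_append]
  rcases fin2 i with rfl | rfl
  · rcases key 0 true with h1 | h1 <;> rcases key 0 false with h2 | h2 <;>
      rcases key0 0 with h3 | h3 <;> rcases key1 0 with h4 | h4 <;> omega
  · rcases key 1 true with h1 | h1 <;> rcases key 1 false with h2 | h2 <;>
      rcases key0 1 with h3 | h3 <;> rcases key1 1 with h4 | h4 <;> omega

theorem stmt_17 (q₀ q₁ : Word 2) (h₀ : q₀ ≠ []) (h₁ : q₁ ≠ [])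
    (hbal : q₀ ++ q₁ ∈ OO 2) (hlen : 2 < (q₀ ++ q₁).length)
    (hnd : ¬ BalDecomp q₀ q₁)
    (hmin : ∀ p₀ p₁ : Word 2, p₀ ≠ [] → p₁ ≠ [] → p₀ ++ p₁ ∈ OO 2 →
      2 < (p₀ ++ p₁).length → (p₀ ++ p₁).length < (q₀ ++ q₁).length →
      BalDecomp p₀ p₁) :
    ¬ (Short q₀ ∧ Short q₁) := by
  rintro ⟨hS0, hS1⟩
  apply hnd
  have hs0 : ∀ i : Fin 2, q₀.count ((i,true) : Letter 2) = 0 ∨ q₀.count ((i,false) : Letter 2) = 0 := by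
    intro i
    rcases not_and_or.mp (hS0 i) with h | h
    · exact Or.inl (List.count_eq_zero.mpr h)
    · exact Or.inr (List.count_eq_zero.mpr h)
  have hs1 : ∀ i : Fin 2, q₁.count ((i,true) : Letter 2) = 0 ∨ q₁.count ((i,false) : Letter 2) = 0 := by
    intro i
    rcases not_and_or.mp (hS1 i) with h | h
    · exact Or.inl (List.count_eq_zero.mpr h)
    · exact Or.inr (List.count_eq_zero.mpr h)
  have hbal' : ∀ i : Fin 2, q₀.count ((i,true) : Letter 2) + q₁.count ((i,true) : Letter 2)
      = q₀.count ((i,false) : Letter 2) + q₁.count ((i,false) : Letter 2) := by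
    intro i
    have h := hbal i
    simp only [List.count_append] at h
    omega
  have hc : ∀ i : Fin 2, ∀ b : Bool, q₀.count ((i,b) : Letter 2) = 0 ∨ q₁.count ((i,b) : Letter 2) = 0 := by
    intro i b
    have h1 := hs0 i; have h2 := hs1 i; have h3 := hbal' i
    cases b <;> (rcases h1 with h | h <;> rcases h2 with h' | h' <;> omega)
  have hLL : q₀.length = q₁.length := by
    have l0 := len_counts q₀; have l1 := len_counts q₁
    have h00 := hbal' 0; have h01 := hbal' 1
    rcases hs0 0 with h | h <;> rcases hs0 1 with h' | h' <;> rcases hs1 0 with h'' | h'' <;>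
      rcases hs1 1 with h''' | h''' <;> omega
  have hPq : P0 q₀ = P0 q₁ := by
    have h00 := hbal' 0
    simp only [P0]
    rcases hs0 0 with h | h <;> rcases hs1 0 with h' | h' <;> omega
  have hL2 : 2 ≤ q₀.length := by
    simp only [List.length_append] at hlen
    omega
  set E : ℕ → ℤ := fun m => (P0 (q₀.take m) : ℤ) - (P0 (q₁.take m) : ℤ) with hE
  have hEstep : ∀ k, (E (k+1) - E k).natAbs ≤ 1 := by
    intro k
    have a0 : P0 (q₀.take (k+1)) = P0 (q₀.take k) + P0 ((q₀.drop k).take 1) := by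
      rw [← P0_append, ← List.take_add]
    have a1 : P0 (q₁.take (k+1)) = P0 (q₁.take k) + P0 ((q₁.drop k).take 1) := by
      rw [← P0_append, ← List.take_add]
    have c0 := P0_take1 (q₀.drop k); have c1 := P0_take1 (q₁.drop k)
    simp only [hE]
    omega
  by_cases hex : ∃ m, 0 < m ∧ m < q₀.length ∧ P0 (q₀.take m) = P0 (q₁.take m)
  · obtain ⟨m, hm0, hmL, hPm⟩ := hex
    have hlt : (q₀.take m).length = m := by rw [List.length_take]; omega
    have hld : (q₀.drop m).length = q₀.length - m := by rw [List.length_drop]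
    refine builder q₀ q₁ (q₀.take m) (q₀.drop m) (q₁.take m) (q₁.drop m) (q₁.take m) (q₁.drop m)
      (List.take_append_drop m q₀) (List.take_append_drop m q₁) hbal
      (List.Perm.cons _ (List.Perm.swap _ _ _)) ?_ ?_ ?_
    · exact pref_bal q₀ q₁ _ _ hc hs0 hs1 (List.take_sublist m q₀) (List.take_sublist m q₁)
        (by rw [List.length_take, List.length_take, ← hLL]) hPm
    · intro h
      rcases List.append_eq_nil_iff.mp h with ⟨h', -⟩
      rw [h'] at hlt; simp at hlt; omega
    · intro h
      rcases List.append_eq_nil_iff.mp h with ⟨h', -⟩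
      rw [h'] at hld; simp at hld; omega
  · push_neg at hex
    have hne : ∀ m, 0 < m → m < q₀.length → E m ≠ 0 := by
      intro m hm1 hm2 h
      apply hex m hm1 hm2
      simp only [hE] at h
      omega
    have hE1 : E 1 ≠ 0 := hne 1 (by omega) (by omega)
    have hsq0 : P0 q₀ = P0 (q₀.take (q₀.length - 1)) + P0 (q₀.drop (q₀.length - 1)) := by
      have h := P0_append (q₀.take (q₀.length - 1)) (q₀.drop (q₀.length - 1))
      rw [List.take_append_drop] at h
      omega
    have hsq1 : P0 q₁ = P0 (q₁.take (q₀.length - 1)) + P0 (q₁.drop (q₀.length - 1)) := by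
      have h := P0_append (q₁.take (q₀.length - 1)) (q₁.drop (q₀.length - 1))
      rw [List.take_append_drop] at h
      omega
    have hlend0 : (q₀.drop (q₀.length - 1)).length = 1 := by rw [List.length_drop]; omega
    have hlend1 : (q₁.drop (q₀.length - 1)).length = 1 := by rw [List.length_drop, ← hLL]; omega
    have hp00 : P0 (q₀.drop (q₀.length - 1)) ≤ 1 := by
      have := P0_le_length (q₀.drop (q₀.length - 1)); omega
    have hp01 : P0 (q₁.drop (q₀.length - 1)) ≤ 1 := by
      have := P0_le_length (q₁.drop (q₀.length - 1)); omega
    have hq0t1 := P0_take1 q₀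
    have hq1t1 := P0_take1 q₁
    have hEL1a : E (q₀.length - 1) = (P0 (q₀.take (q₀.length - 1)) : ℤ) - P0 (q₁.take (q₀.length - 1)) := by
      simp only [hE]
    have hE1a : E 1 = (P0 (q₀.take 1) : ℤ) - P0 (q₁.take 1) := by simp only [hE]
    rcases lt_or_gt_of_ne hE1 with hneg | hpos
    · -- E 1 < 0 : q₁ starts with pair 0, q₀ ends with pair 0
      have hEL1neg : E (q₀.length - 1) < 0 := by
        rcases lt_or_gt_of_ne (hne (q₀.length - 1) (by omega) (by omega)) with h | h
        · exact h
        · exfalso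
          obtain ⟨k, hk1, hk2, hk3⟩ := ivt' E hEstep 1 (q₀.length - 1) (by omega)
            (le_of_lt hneg) (le_of_lt h)
          exact hne k (by omega) (by omega) hk3
      have e1 : P0 (q₁.take 1) = 1 ∧ P0 (q₀.take 1) = 0 := by
        rw [hE1a] at hneg; omega
      have eL : P0 (q₀.drop (q₀.length - 1)) = 1 ∧ P0 (q₁.drop (q₀.length - 1)) = 0 := by
        rw [hEL1a] at hEL1neg; omega
      obtain ⟨x, hx⟩ := List.length_eq_one_iff.mp hlend0
      have hlent1 : (q₁.take 1).length = 1 := by rw [List.length_take, ← hLL]; omega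
      obtain ⟨y, hy⟩ := List.length_eq_one_iff.mp hlent1
      obtain ⟨ix, bx⟩ := x
      obtain ⟨iy, by'⟩ := y
      rcases fin2 ix with rfl | rfl
      swap
      · exfalso
        have h := eL.1
        rw [hx] at h
        cases bx <;> simp [P0, List.count_singleton] at h
      rcases fin2 iy with rfl | rfl
      swap
      · exfalso
        have h := e1.1
        rw [hy] at h
        cases by' <;> simp [P0, List.count_singleton] at h
      have hxmem : ((0,bx) : Letter 2) ∈ q₀ := by
        have h : ((0,bx) : Letter 2) ∈ q₀.drop (q₀.length - 1) := by
          rw [hx]; exact List.mem_singleton_self _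
        exact List.mem_of_mem_drop h
      have hymem : ((0,by') : Letter 2) ∈ q₁ := by
        have h : ((0,by') : Letter 2) ∈ q₁.take 1 := by
          rw [hy]; exact List.mem_singleton_self _
        exact List.mem_of_mem_take h
      have hbne : by' = !bx := by
        rcases hc 0 bx with h | h
        · have : 0 < q₀.count ((0,bx) : Letter 2) := List.count_pos_iff.mpr hxmem
          omega
        · have hnm : ((0,bx) : Letter 2) ∉ q₁ := List.count_eq_zero.mp h
          have : by' ≠ bx := by
            intro hb; rw [hb] at hymem; exact hnm hymem
          cases bx <;> cases by' <;> simp_all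
      have hBC : (q₀.drop (q₀.length - 1)) ++ (q₁.take 1) ∈ OO 2 := by
        rw [hx, hy, hbne]
        intro i
        rcases fin2 i with rfl | rfl <;> cases bx <;> decide
      have hcnt : ∀ l : Letter 2,
          ((q₀.drop (q₀.length - 1)) ++ (q₁.take 1)).count l
          + ((q₀.take (q₀.length - 1)) ++ (q₁.drop 1)).count l = (q₀ ++ q₁).count l := by
        intro l
        have c0 := List.count_append (a := l) (l₁ := q₀.take (q₀.length - 1)) (l₂ := q₀.drop (q₀.length - 1))
        rw [List.take_append_drop] at c0
        have c1 := List.count_append (a := l) (l₁ := q₁.take 1) (l₂ := q₁.drop 1)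
        rw [List.take_append_drop] at c1
        simp only [List.count_append]
        omega
      refine builder q₀ q₁ (q₀.take (q₀.length - 1)) (q₀.drop (q₀.length - 1))
        (q₁.take 1) (q₁.drop 1) (q₁.drop 1) (q₁.take 1)
        (List.take_append_drop _ q₀) (List.take_append_drop _ q₁) hbal
        (List.Perm.cons _ (List.perm_append_comm (l₁ := [q₁.drop 1])
          (l₂ := [q₀.drop (q₀.length - 1), q₁.take 1]))) ?_ ?_ ?_
      · exact oo_compl (q₀ ++ q₁) _ _ hcnt hbal hBC
      · intro h
        rcases List.append_eq_nil_iff.mp h with ⟨h', -⟩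
        have : (q₀.take (q₀.length - 1)).length = q₀.length - 1 := by
          rw [List.length_take]; omega
        rw [h'] at this; simp at this; omega
      · intro h
        rcases List.append_eq_nil_iff.mp h with ⟨h', -⟩
        rw [h'] at hlend0; simp at hlend0
    · -- E 1 > 0 : q₀ starts with pair 0, q₁ ends with pair 0
      have hEL1pos : 0 < E (q₀.length - 1) := by
        rcases lt_or_gt_of_ne (hne (q₀.length - 1) (by omega) (by omega)) with h | h
        · exfalso
          obtain ⟨k, hk1, hk2, hk3⟩ := ivt E hEstep 1 (q₀.length - 1) (by omega)
            (le_of_lt hpos) (le_of_lt h)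
          exact hne k (by omega) (by omega) hk3
        · exact h
      have e1 : P0 (q₀.take 1) = 1 ∧ P0 (q₁.take 1) = 0 := by
        rw [hE1a] at hpos; omega
      have eL : P0 (q₁.drop (q₀.length - 1)) = 1 ∧ P0 (q₀.drop (q₀.length - 1)) = 0 := by
        rw [hEL1a] at hEL1pos; omega
      obtain ⟨y, hy⟩ := List.length_eq_one_iff.mp hlend1
      have hlent0 : (q₀.take 1).length = 1 := by rw [List.length_take]; omega
      obtain ⟨x, hx⟩ := List.length_eq_one_iff.mp hlent0
      obtain ⟨ix, bx⟩ := x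
      obtain ⟨iy, by'⟩ := y
      rcases fin2 ix with rfl | rfl
      swap
      · exfalso
        have h := e1.1
        rw [hx] at h
        cases bx <;> simp [P0, List.count_singleton] at h
      rcases fin2 iy with rfl | rfl
      swap
      · exfalso
        have h := eL.1
        rw [hy] at h
        cases by' <;> simp [P0, List.count_singleton] at h
      have hxmem : ((0,bx) : Letter 2) ∈ q₀ := by
        have h : ((0,bx) : Letter 2) ∈ q₀.take 1 := by
          rw [hx]; exact List.mem_singleton_self _
        exact List.mem_of_mem_take h
      have hymem : ((0,by') : Letter 2) ∈ q₁ := by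
        have h : ((0,by') : Letter 2) ∈ q₁.drop (q₀.length - 1) := by
          rw [hy]; exact List.mem_singleton_self _
        exact List.mem_of_mem_drop h
      have hbne : by' = !bx := by
        rcases hc 0 bx with h | h
        · have : 0 < q₀.count ((0,bx) : Letter 2) := List.count_pos_iff.mpr hxmem
          omega
        · have hnm : ((0,bx) : Letter 2) ∉ q₁ := List.count_eq_zero.mp h
          have : by' ≠ bx := by
            intro hb; rw [hb] at hymem; exact hnm hymem
          cases bx <;> cases by' <;> simp_all
      refine builder q₀ q₁ (q₀.take 1) (q₀.drop 1)
        (q₁.take (q₀.length - 1)) (q₁.drop (q₀.length - 1))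
        (q₁.drop (q₀.length - 1)) (q₁.take (q₀.length - 1))
        (List.take_append_drop _ q₀) (List.take_append_drop _ q₁) hbal
        (List.Perm.cons _ (List.perm_append_comm (l₁ := [q₁.drop (q₀.length - 1)])
          (l₂ := [q₀.drop 1, q₁.take (q₀.length - 1)]))) ?_ ?_ ?_
      · rw [hx, hy, hbne]
        intro i
        rcases fin2 i with rfl | rfl <;> cases bx <;> decide
      · rw [hx]; simp
      · intro h
        rcases List.append_eq_nil_iff.mp h with ⟨h', -⟩
        have : (q₀.drop 1).length = q₀.length - 1 := by rw [List.length_drop]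
        rw [h'] at this; simp at this; omega
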